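/- For γ, β ∈ (0,π) with γ + β < π, one has c(2γ, β, β) = 2 b(γ, β), where b(γ,β) := ∫₀^∞ [cosh(πθ/2) cosh((γ-β)θ) - cosh((π/2 - γ - β)θ)] / [2 sinh((γ+β)θ) sinh(πθ/2)] dθ, and c(γ,β,α) := b(γ+β, α) + b(γ+α, β) + ∫₀^∞ cosh(πθ/2)[cosh((β+α)θ) - cosh((β-α)θ)] / [sinh((γ+β+α)θ) sinh(πθ/2)] dθ. -/

import Mathlib

open Real MeasureTheory Set

noncomputable def bFun (γ β : ℝ) : ℝ :=
  ∫ θ in Set.Ioi (0:ℝ),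
    (Real.cosh (π * θ / 2) * Real.cosh ((γ - β) * θ) - Real.cosh ((π / 2 - γ - β) * θ)) /
      (2 * Real.sinh ((γ + β) * θ) * Real.sinh (π * θ / 2))

noncomputable def cFun (γ β α : ℝ) : ℝ :=
  bFun (γ + β) α + bFun (γ + α) β +
    ∫ θ in Set.Ioi (0:ℝ),
      Real.cosh (π * θ / 2) * (Real.cosh ((β + α) * θ) - Real.cosh ((β - α) * θ)) /
        (Real.sinh ((γ + β + α) * θ) * Real.sinh (π * θ / 2))

lemma sinh_le_mul_cosh {x : ℝ} (hx : 0 ≤ x) : Real.sinh x ≤ x * Real.cosh x := by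
  have hdiff : ∀ y : ℝ, HasDerivAt (fun t : ℝ => t * Real.cosh t - Real.sinh t)
      (y * Real.sinh y) y := by
    intro y
    have h1 := (hasDerivAt_id y).mul (Real.hasDerivAt_cosh y)
    have h2 := Real.hasDerivAt_sinh y
    have h3 : HasDerivAt (fun t : ℝ => t * Real.cosh t - Real.sinh t)
      (1 * Real.cosh y + y * Real.sinh y - Real.cosh y) y := h1.sub h2
    simp only [id_eq, one_mul] at h3
    convert h3 using 1
    ring
  have key : MonotoneOn (fun t : ℝ => t * Real.cosh t - Real.sinh t) (Set.Ici 0) := by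
    apply monotoneOn_of_deriv_nonneg (convex_Ici 0)
    · exact ((continuous_id.mul Real.continuous_cosh).sub Real.continuous_sinh).continuousOn
    · intro y _
      exact (hdiff y).differentiableAt.differentiableWithinAt
    · intro y hy
      rw [interior_Ici, Set.mem_Ioi] at hy
      rw [(hdiff y).deriv]
      exact mul_nonneg hy.le (by simp [hy.le])
  have h0 := key Set.self_mem_Ici (Set.mem_Ici.mpr hx) hx
  simp only [Real.cosh_zero, Real.sinh_zero, mul_one, zero_mul, sub_zero] at h0
  linarith

lemma sinh_lb {x₀ x : ℝ} (h0 : 0 < x₀) (hx : x₀ ≤ x) :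
    (1 - Real.exp (-(2 * x₀))) / 2 * Real.exp x ≤ Real.sinh x := by
  rw [Real.sinh_eq]
  have h1 : Real.exp (-x) = Real.exp x * Real.exp (-(2 * x)) := by
    rw [← Real.exp_add]; ring_nf
  have h2 : Real.exp (-(2 * x)) ≤ Real.exp (-(2 * x₀)) := Real.exp_le_exp.mpr (by linarith)
  nlinarith [Real.exp_pos x, Real.exp_pos (-(2 * x₀)), Real.exp_pos (-(2 * x)),
    mul_le_mul_of_nonneg_left h2 (Real.exp_pos x).le]

lemma abs_sinh_le (x : ℝ) : |Real.sinh x| ≤ Real.exp |x| / 2 := by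
  rw [Real.abs_sinh, Real.sinh_eq]
  have := Real.exp_pos (-|x|)
  linarith

lemma num_eq (p A B : ℝ) :
    Real.cosh p * Real.cosh (A - B) - Real.cosh (p - (A + B))
      = Real.sinh (p - B) * Real.sinh A + Real.sinh (p - A) * Real.sinh B := by
  rw [Real.cosh_sub, Real.cosh_sub, Real.sinh_sub, Real.sinh_sub,
    Real.sinh_add, Real.cosh_add]
  ring

lemma num_eq2 (p A B : ℝ) :
    Real.cosh p * Real.cosh (A - B) - Real.cosh (p - (A + B))
      = Real.sinh p * Real.sinh (A + B) - 2 * Real.cosh p * Real.sinh A * Real.sinh B := by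
  rw [Real.cosh_sub, Real.cosh_sub, Real.sinh_add, Real.cosh_add]
  ring

set_option maxHeartbeats 1000000 in
lemma integrable_b (a b : ℝ) (ha : 0 < a) (hb : 0 < b) :
    IntegrableOn (fun θ : ℝ =>
      (Real.cosh (π * θ / 2) * Real.cosh ((a - b) * θ) - Real.cosh ((π / 2 - a - b) * θ)) /
        (2 * Real.sinh ((a + b) * θ) * Real.sinh (π * θ / 2))) (Set.Ioi 0) := by
  have hπ := Real.pi_pos
  have hm : Measurable (fun θ : ℝ =>
      (Real.cosh (π * θ / 2) * Real.cosh ((a - b) * θ) - Real.cosh ((π / 2 - a - b) * θ)) /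
        (2 * Real.sinh ((a + b) * θ) * Real.sinh (π * θ / 2))) := by
    apply Measurable.div
    · exact ((Real.continuous_cosh.comp (by continuity)).mul
        (Real.continuous_cosh.comp (by continuity))).measurable.sub
        (Real.continuous_cosh.comp (by continuity)).measurable
    · exact ((continuous_const.mul (Real.continuous_sinh.comp (by continuity))).mul
        (Real.continuous_sinh.comp (by continuity))).measurable
  rw [← Set.Ioc_union_Ioi_eq_Ioi (zero_le_one' ℝ), integrableOn_union]
  constructor
  · -- on Ioc 0 1 : bounded
    have hbound : ∀ θ ∈ Set.Ioc (0:ℝ) 1,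
        ‖(Real.cosh (π * θ / 2) * Real.cosh ((a - b) * θ) - Real.cosh ((π / 2 - a - b) * θ)) /
          (2 * Real.sinh ((a + b) * θ) * Real.sinh (π * θ / 2))‖
          ≤ 1/2 + 2 * b * Real.cosh b * Real.cosh (π/2) / π := by
      intro θ hθ
      obtain ⟨hθ0, hθ1⟩ := hθ
      have hsp : 0 < Real.sinh (π * θ / 2) := Real.sinh_pos_iff.mpr (by positivity)
      have hS : 0 < Real.sinh (a * θ + b * θ) := Real.sinh_pos_iff.mpr (by positivity)
      have hsA : 0 < Real.sinh (a * θ) := Real.sinh_pos_iff.mpr (by positivity)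
      have hsB : 0 < Real.sinh (b * θ) := Real.sinh_pos_iff.mpr (by positivity)
      have hF : (Real.cosh (π * θ / 2) * Real.cosh ((a - b) * θ)
            - Real.cosh ((π / 2 - a - b) * θ)) /
            (2 * Real.sinh ((a + b) * θ) * Real.sinh (π * θ / 2))
          = 1/2 - Real.cosh (π * θ / 2) * Real.sinh (a * θ) * Real.sinh (b * θ) /
          (Real.sinh (a * θ + b * θ) * Real.sinh (π * θ / 2)) := by
        rw [show (a - b) * θ = a * θ - b * θ from by ring,
          show (π / 2 - a - b) * θ = π * θ / 2 - (a * θ + b * θ) from by ring,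
          show (a + b) * θ = a * θ + b * θ from by ring, num_eq2]
        field_simp
      have l1 : Real.sinh (a * θ) ≤ Real.sinh (a * θ + b * θ) :=
        Real.sinh_le_sinh.mpr (by nlinarith)
      have l2 : Real.sinh (b * θ) ≤ b * θ * Real.cosh b := by
        have h1 : Real.sinh (b * θ) ≤ b * θ * Real.cosh (b * θ) :=
          sinh_le_mul_cosh (by positivity)
        have h2 : Real.cosh (b * θ) ≤ Real.cosh b := by
          rw [Real.cosh_le_cosh, abs_of_nonneg (by positivity), abs_of_nonneg hb.le]
          nlinarith
        have h3 : b * θ * Real.cosh (b * θ) ≤ b * θ * Real.cosh b :=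
          mul_le_mul_of_nonneg_left h2 (by positivity)
        linarith
      have l3 : Real.cosh (π * θ / 2) ≤ Real.cosh (π / 2) := by
        rw [Real.cosh_le_cosh, abs_of_nonneg (by positivity), abs_of_nonneg (by positivity)]
        nlinarith
      have l4 : π * θ / 2 ≤ Real.sinh (π * θ / 2) := Real.self_le_sinh_iff.mpr (by positivity)
      have hXle : Real.cosh (π * θ / 2) * Real.sinh (a * θ) * Real.sinh (b * θ) /
          (Real.sinh (a * θ + b * θ) * Real.sinh (π * θ / 2))
          ≤ 2 * b * Real.cosh b * Real.cosh (π/2) / π := by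
        have m1 : Real.cosh (π * θ / 2) * Real.sinh (a * θ)
            ≤ Real.cosh (π/2) * Real.sinh (a * θ + b * θ) :=
          mul_le_mul l3 l1 hsA.le (by positivity)
        have m2 : Real.cosh (π * θ / 2) * Real.sinh (a * θ) * Real.sinh (b * θ)
            ≤ Real.cosh (π/2) * Real.sinh (a * θ + b * θ) * (b * θ * Real.cosh b) :=
          mul_le_mul m1 l2 hsB.le (by positivity)
        calc Real.cosh (π * θ / 2) * Real.sinh (a * θ) * Real.sinh (b * θ) /
            (Real.sinh (a * θ + b * θ) * Real.sinh (π * θ / 2))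
            ≤ Real.cosh (π/2) * Real.sinh (a * θ + b * θ) * (b * θ * Real.cosh b) /
              (Real.sinh (a * θ + b * θ) * (π * θ / 2)) := by
              apply div_le_div₀ (by positivity) m2 (by positivity)
              have : Real.sinh (a * θ + b * θ) * (π * θ / 2)
                  ≤ Real.sinh (a * θ + b * θ) * Real.sinh (π * θ / 2) := by nlinarith
              linarith
          _ = 2 * b * Real.cosh b * Real.cosh (π/2) / π := by
              field_simp
      have hX0 : 0 ≤ Real.cosh (π * θ / 2) * Real.sinh (a * θ) * Real.sinh (b * θ) /
          (Real.sinh (a * θ + b * θ) * Real.sinh (π * θ / 2)) := by positivity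
      rw [Real.norm_eq_abs, hF]
      have hM0 : (0:ℝ) ≤ 2 * b * Real.cosh b * Real.cosh (π/2) / π := by positivity
      rw [abs_le]
      constructor <;> nlinarith
    apply Integrable.mono' (g := fun _ : ℝ => 1/2 + 2 * b * Real.cosh b * Real.cosh (π/2) / π)
    · exact integrableOn_const measure_Ioc_lt_top.ne
    · exact hm.aestronglyMeasurable
    · filter_upwards [ae_restrict_mem measurableSet_Ioc] with θ hθ
      exact hbound θ hθ
  · -- on Ioi 1 : exponential decay
    have hδ : 0 < min π (min (2 * a) (2 * b)) := lt_min hπ (lt_min (by linarith) (by linarith))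
    set δ : ℝ := min π (min (2 * a) (2 * b)) with hδdef
    have hc1 : 0 < 1 - Real.exp (-(2 * (π/2))) := by
      have : Real.exp (-(2 * (π/2))) < 1 := Real.exp_lt_one_iff.mpr (by linarith)
      linarith
    have hc2 : 0 < 1 - Real.exp (-(2 * (a + b))) := by
      have : Real.exp (-(2 * (a + b))) < 1 := Real.exp_lt_one_iff.mpr (by linarith)
      linarith
    set c1 : ℝ := 1 - Real.exp (-(2 * (π/2))) with hc1def
    set c2 : ℝ := 1 - Real.exp (-(2 * (a + b))) with hc2def
    have hbound : ∀ θ ∈ Set.Ioi (1:ℝ),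
        ‖(Real.cosh (π * θ / 2) * Real.cosh ((a - b) * θ) - Real.cosh ((π / 2 - a - b) * θ)) /
          (2 * Real.sinh ((a + b) * θ) * Real.sinh (π * θ / 2))‖
          ≤ 1 / (c1 * c2) * Real.exp (-δ * θ) := by
      intro θ hθ
      have hθ1 : 1 < θ := hθ
      have hθ0 : 0 < θ := by linarith
      have hsp : 0 < Real.sinh (π * θ / 2) := Real.sinh_pos_iff.mpr (by positivity)
      have hS : 0 < Real.sinh (a * θ + b * θ) := Real.sinh_pos_iff.mpr (by positivity)
      have hd1 : δ ≤ π := min_le_left _ _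
      have hd2 : δ ≤ 2 * a := le_trans (min_le_right _ _) (min_le_left _ _)
      have hd3 : δ ≤ 2 * b := le_trans (min_le_right _ _) (min_le_right _ _)
      have hF : (Real.cosh (π * θ / 2) * Real.cosh ((a - b) * θ)
            - Real.cosh ((π / 2 - a - b) * θ)) /
            (2 * Real.sinh ((a + b) * θ) * Real.sinh (π * θ / 2))
          = (Real.sinh (π * θ / 2 - b * θ) * Real.sinh (a * θ)
            + Real.sinh (π * θ / 2 - a * θ) * Real.sinh (b * θ)) /
          (2 * Real.sinh (a * θ + b * θ) * Real.sinh (π * θ / 2)) := by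
        rw [show (a - b) * θ = a * θ - b * θ from by ring,
          show (π / 2 - a - b) * θ = π * θ / 2 - (a * θ + b * θ) from by ring,
          show (a + b) * θ = a * θ + b * θ from by ring, num_eq]
      have key1 : |π * θ / 2 - b * θ| + |a * θ|
          ≤ π * θ / 2 + (a * θ + b * θ) - δ * θ := by
        have h1 : |π * θ / 2 - b * θ| ≤ π * θ / 2 + b * θ - δ * θ := by
          rw [abs_le]
          constructor
          · linarith [mul_le_mul_of_nonneg_right hd1 hθ0.le]
          · linarith [mul_le_mul_of_nonneg_right hd3 hθ0.le]
        rw [abs_of_nonneg (by positivity : (0:ℝ) ≤ a * θ)]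
        linarith
      have key2 : |π * θ / 2 - a * θ| + |b * θ|
          ≤ π * θ / 2 + (a * θ + b * θ) - δ * θ := by
        have h1 : |π * θ / 2 - a * θ| ≤ π * θ / 2 + a * θ - δ * θ := by
          rw [abs_le]
          constructor
          · linarith [mul_le_mul_of_nonneg_right hd1 hθ0.le]
          · linarith [mul_le_mul_of_nonneg_right hd2 hθ0.le]
        rw [abs_of_nonneg (by positivity : (0:ℝ) ≤ b * θ)]
        linarith
      have tbound : ∀ X Y : ℝ, |X| + |Y| ≤ π * θ / 2 + (a * θ + b * θ) - δ * θ →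
          |Real.sinh X * Real.sinh Y|
            ≤ Real.exp (π * θ / 2 + (a * θ + b * θ) - δ * θ) / 4 := by
        intro X Y hXY
        rw [abs_mul]
        calc |Real.sinh X| * |Real.sinh Y|
            ≤ Real.exp |X| / 2 * (Real.exp |Y| / 2) :=
              mul_le_mul (abs_sinh_le X) (abs_sinh_le Y) (abs_nonneg _) (by positivity)
          _ = Real.exp (|X| + |Y|) / 4 := by rw [Real.exp_add]; ring
          _ ≤ Real.exp (π * θ / 2 + (a * θ + b * θ) - δ * θ) / 4 := by
              have := Real.exp_le_exp.mpr hXY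
              linarith
      have habs : |Real.sinh (π * θ / 2 - b * θ) * Real.sinh (a * θ)
            + Real.sinh (π * θ / 2 - a * θ) * Real.sinh (b * θ)|
          ≤ Real.exp (π * θ / 2 + (a * θ + b * θ) - δ * θ) / 2 := by
        have t1 := tbound (π * θ / 2 - b * θ) (a * θ) key1
        have t2 := tbound (π * θ / 2 - a * θ) (b * θ) key2
        calc |Real.sinh (π * θ / 2 - b * θ) * Real.sinh (a * θ)
              + Real.sinh (π * θ / 2 - a * θ) * Real.sinh (b * θ)|
            ≤ |Real.sinh (π * θ / 2 - b * θ) * Real.sinh (a * θ)|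
              + |Real.sinh (π * θ / 2 - a * θ) * Real.sinh (b * θ)| := abs_add_le _ _
          _ ≤ Real.exp (π * θ / 2 + (a * θ + b * θ) - δ * θ) / 2 := by linarith
      have hspl : c1 / 2 * Real.exp (π * θ / 2) ≤ Real.sinh (π * θ / 2) := by
        rw [hc1def]
        exact sinh_lb (by positivity) (by nlinarith)
      have hSl : c2 / 2 * Real.exp (a * θ + b * θ) ≤ Real.sinh (a * θ + b * θ) := by
        rw [hc2def]
        exact sinh_lb (by positivity) (by nlinarith)
      rw [Real.norm_eq_abs, hF, abs_div,
        abs_of_pos (mul_pos (mul_pos two_pos hS) hsp)]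
      have hden : 2 * (c2 / 2 * Real.exp (a * θ + b * θ)) * (c1 / 2 * Real.exp (π * θ / 2))
          ≤ 2 * Real.sinh (a * θ + b * θ) * Real.sinh (π * θ / 2) := by
        have := mul_le_mul hSl hspl (by positivity) hS.le
        nlinarith
      calc |Real.sinh (π * θ / 2 - b * θ) * Real.sinh (a * θ)
              + Real.sinh (π * θ / 2 - a * θ) * Real.sinh (b * θ)| /
            (2 * Real.sinh (a * θ + b * θ) * Real.sinh (π * θ / 2))
          ≤ (Real.exp (π * θ / 2 + (a * θ + b * θ) - δ * θ) / 2) /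
            (2 * (c2 / 2 * Real.exp (a * θ + b * θ)) * (c1 / 2 * Real.exp (π * θ / 2))) := by
            apply div_le_div₀ (by positivity) habs (by positivity) hden
        _ = 1 / (c1 * c2) * Real.exp (-δ * θ) := by
            have e : Real.exp (π * θ / 2 + (a * θ + b * θ) - δ * θ)
                = Real.exp (π * θ / 2) * Real.exp (a * θ + b * θ) * Real.exp (-δ * θ) := by
              rw [← Real.exp_add, ← Real.exp_add]; ring_nf
            rw [e]
            field_simp
    apply Integrable.mono' (g := fun x : ℝ => 1 / (c1 * c2) * Real.exp (-δ * x))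
    · exact (exp_neg_integrableOn_Ioi 1 hδ).const_mul _
    · exact hm.aestronglyMeasurable
    · filter_upwards [ae_restrict_mem measurableSet_Ioi] with θ hθ
      exact hbound θ hθ

lemma hyp_id (u v z : ℝ) (hu : Real.sinh u ≠ 0) (hz : Real.sinh z ≠ 0) :
    Real.cosh z * (Real.cosh (u - v) - 1) / (Real.sinh (u + u) * Real.sinh z)
      + 2 * ((Real.cosh z * Real.cosh (u + v) - Real.cosh (z - (u + u))) /
        (2 * Real.sinh (u + u) * Real.sinh z))
      = 2 * ((Real.cosh z * Real.cosh v - Real.cosh (z - u)) /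
        (2 * Real.sinh u * Real.sinh z)) := by
  have hcu : (0:ℝ) < Real.cosh u := Real.cosh_pos u
  have h2 : Real.sinh (u + u) = 2 * Real.sinh u * Real.cosh u := by
    rw [show u + u = 2 * u from by ring, Real.sinh_two_mul]
  have h3 : Real.cosh (u + u) = Real.cosh u ^ 2 + Real.sinh u ^ 2 := by
    rw [show u + u = 2 * u from by ring, Real.cosh_two_mul]
  have hpy := Real.cosh_sq_sub_sinh_sq u
  rw [Real.cosh_sub z (u + u), Real.cosh_sub z u, Real.cosh_sub u v, Real.cosh_add u v, h2, h3]
  field_simp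
  ring_nf
  linear_combination (Real.cosh z) * hpy

theorem stmt5 (γ β : ℝ) (hγ : γ ∈ Set.Ioo 0 π) (hβ : β ∈ Set.Ioo 0 π)
    (hsum : γ + β < π) :
    cFun (2 * γ) β β = 2 * bFun γ β := by
  obtain ⟨hγ0, hγπ⟩ := hγ
  obtain ⟨hβ0, hβπ⟩ := hβ
  have hab : 0 < 2 * γ + β := by linarith
  have hI1 := integrable_b (2 * γ + β) β hab hβ0
  have hIh := integrable_b γ β hγ0 hβ0
  have hcongr : (∫ θ in Set.Ioi (0:ℝ),
      Real.cosh (π * θ / 2) * (Real.cosh ((β + β) * θ) - Real.cosh ((β - β) * θ)) /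
        (Real.sinh ((2 * γ + β + β) * θ) * Real.sinh (π * θ / 2)))
      = ∫ θ in Set.Ioi (0:ℝ),
      (2 * ((Real.cosh (π * θ / 2) * Real.cosh ((γ - β) * θ) - Real.cosh ((π / 2 - γ - β) * θ)) /
        (2 * Real.sinh ((γ + β) * θ) * Real.sinh (π * θ / 2)))
      - 2 * ((Real.cosh (π * θ / 2) * Real.cosh ((2 * γ + β - β) * θ)
          - Real.cosh ((π / 2 - (2 * γ + β) - β) * θ)) /
        (2 * Real.sinh ((2 * γ + β + β) * θ) * Real.sinh (π * θ / 2)))) := by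
    apply setIntegral_congr_fun measurableSet_Ioi
    intro θ hθ
    have hθ0 : (0:ℝ) < θ := hθ
    have hu : Real.sinh ((γ + β) * θ) ≠ 0 :=
      ne_of_gt (Real.sinh_pos_iff.mpr (by positivity))
    have hz : Real.sinh (π * θ / 2) ≠ 0 :=
      ne_of_gt (Real.sinh_pos_iff.mpr (by positivity))
    have H := hyp_id ((γ + β) * θ) ((γ - β) * θ) (π * θ / 2) hu hz
    have e1 : (β + β) * θ = (γ + β) * θ - (γ - β) * θ := by ring
    have e2 : (β - β) * θ = 0 := by ring
    have e3 : (2 * γ + β + β) * θ = (γ + β) * θ + (γ + β) * θ := by ring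
    have e4 : (2 * γ + β - β) * θ = (γ + β) * θ + (γ - β) * θ := by ring
    have e5 : (π / 2 - (2 * γ + β) - β) * θ = π * θ / 2 - ((γ + β) * θ + (γ + β) * θ) := by
      ring
    have e6 : (π / 2 - γ - β) * θ = π * θ / 2 - (γ + β) * θ := by ring
    simp only [e1, e2, e3, e4, e5, e6, Real.cosh_zero]
    linarith [H]
  unfold cFun
  rw [hcongr]
  rw [integral_sub (hIh.const_mul 2) (hI1.const_mul 2), integral_const_mul, integral_const_mul]
  unfold bFun
  ring
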